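/- Consider n ≥ 2 agents on a nonatomic probability space: agent 1 has RDU functional U₁(X) = ∫₀¹ u₁(F_X⁻¹(t)) T̃′(t) dt, and each agent i = 2,…,n has EU functional U_i(X) = E_P[u_i(X)]. Fix w ∈ ℝ. Then: (i) for every weight vector λ = (λ₂,…,λₙ) with all λ_i > 0, every allocation (X₁,…,Xₙ) ∈ A(w) that maximizes U₁(X₁) + Σ_{i=2}^n λ_i U_i(X_i) over A(w) is Pareto optimal; (ii) if moreover T is convex, then every Pareto-optimal allocation in A(w) maximizes U₁(X₁) + Σ_{i=2}^n λ_i U_i(X_i) over A(w) for some weight vector λ with all λ_i > 0. -/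

import Mathlib

open MeasureTheory Set

noncomputable section

variable {Ω : Type*} [MeasurableSpace Ω]

/-- The cumulative distribution function `F_X(x) = P(X ≤ x)` of a random variable. -/
def cdfR (P : Measure Ω) (X : Ω → ℝ) (x : ℝ) : ℝ := (P {ω | X ω ≤ x}).toReal

/-- The left-continuous quantile function `F_X⁻¹(t) = inf {x | F_X(x) ≥ t}`. -/
def quantR (P : Measure Ω) (X : Ω → ℝ) (t : ℝ) : ℝ := sInf {x : ℝ | t ≤ cdfR P X x}

/-- A bounded (measurable) random variable. -/
def IsBddRV (X : Ω → ℝ) : Prop := Measurable X ∧ ∃ C : ℝ, ∀ ω, |X ω| ≤ C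

/-- Comonotonicity of two random variables. -/
def ComonRV (Y Z : Ω → ℝ) : Prop := ∀ ω ω' : Ω, 0 ≤ (Y ω - Y ω') * (Z ω - Z ω')

/-- `U` is uniformly distributed on `(0,1)` under `P`. -/
def UnifOn01 (P : Measure Ω) (U : Ω → ℝ) : Prop :=
  Measurable U ∧ ∀ t ∈ Icc (0:ℝ) 1, cdfR P U t = t

/-- A nonatomic measure. -/
def NonatomicM (P : Measure Ω) : Prop :=
  ∀ s : Set Ω, MeasurableSet s → P s ≠ 0 →
    ∃ t : Set Ω, MeasurableSet t ∧ t ⊆ s ∧ 0 < P t ∧ P t < P s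

/-- Expected utility. -/
def EUf (P : Measure Ω) (u : ℝ → ℝ) (X : Ω → ℝ) : ℝ := ∫ ω, u (X ω) ∂P

/-- The conjugate `T̃(t) = 1 - T(1-t)` of a probability weighting function. -/
def conjW (T : ℝ → ℝ) : ℝ → ℝ := fun t => 1 - T (1 - t)

/-- Rank-dependent utility `∫₀¹ u(F_X⁻¹(t)) Tc′(t) dt`, where `Tc` is the conjugate
probability weighting function. -/
def RDUf (P : Measure Ω) (u : ℝ → ℝ) (Tc : ℝ → ℝ) (X : Ω → ℝ) : ℝ :=
  ∫ t in Ioo (0:ℝ) 1, u (quantR P X t) * deriv Tc t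

/-- A probability weighting function: maps `[0,1]` to `[0,1]`, twice differentiable,
strictly increasing, `T(0) = 0`, `T(1) = 1`. -/
def IsPWF (T : ℝ → ℝ) : Prop :=
  (∀ t ∈ Icc (0:ℝ) 1, T t ∈ Icc (0:ℝ) 1) ∧ StrictMonoOn T (Icc (0:ℝ) 1) ∧
    (∀ t ∈ Icc (0:ℝ) 1, DifferentiableAt ℝ T t) ∧
    (∀ t ∈ Icc (0:ℝ) 1, DifferentiableAt ℝ (deriv T) t) ∧ T 0 = 0 ∧ T 1 = 1

/-- A utility function: twice differentiable, strictly concave, strictly increasing. -/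
def IsUtility (u : ℝ → ℝ) : Prop :=
  (∀ x, DifferentiableAt ℝ u x) ∧ (∀ x, DifferentiableAt ℝ (deriv u) x) ∧
    StrictConcaveOn ℝ univ u ∧ StrictMono u

/-- `d` is the convex envelope of `g` on `[0,1]`: the greatest convex function
below `g` on `[0,1]`. -/
def IsConvexEnvelope (g d : ℝ → ℝ) : Prop :=
  ConvexOn ℝ (Icc (0:ℝ) 1) d ∧ (∀ t ∈ Icc (0:ℝ) 1, d t ≤ g t) ∧
    ∀ h : ℝ → ℝ, ConvexOn ℝ (Icc (0:ℝ) 1) h → (∀ t ∈ Icc (0:ℝ) 1, h t ≤ g t) →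
      ∀ t ∈ Icc (0:ℝ) 1, h t ≤ d t

/-- Feasible allocations: bounded random variables summing a.s. to the constant `w`. -/
def AllocC (P : Measure Ω) {m : ℕ} (w : ℝ) (X : Fin m → Ω → ℝ) : Prop :=
  (∀ i, IsBddRV (X i)) ∧ ∀ᵐ ω ∂P, (∑ i, X i ω) = w

/-- A quantile function: a nondecreasing left-continuous function on `(0,1)`. -/
def IsQuantFun (f : ℝ → ℝ) : Prop :=
  MonotoneOn f (Ioo (0:ℝ) 1) ∧ ∀ t ∈ Ioo (0:ℝ) 1, ContinuousWithinAt f (Iic t) t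

/-- `I_i := (u_i′)⁻¹`, the inverse marginal utility. -/
def invMarg (u : ℝ → ℝ) : ℝ → ℝ := Function.invFun (deriv u)

end
set_option linter.unusedSectionVars false
section QuantLemmas

open MeasureTheory Set Filter Topology

variable {Ω : Type*} [MeasurableSpace Ω] (P : Measure Ω) [IsProbabilityMeasure P]
variable {X : Ω → ℝ} {C t x : ℝ}

lemma cdfR_mono : Monotone (cdfR P X) := by
  intro a b hab
  exact ENNReal.toReal_mono (measure_ne_top _ _)
    (measure_mono (fun ω h => le_trans h hab))

lemma cdfR_eq_one (hC : ∀ ω, |X ω| ≤ C) (hx : C ≤ x) : cdfR P X x = 1 := by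
  have : {ω | X ω ≤ x} = univ := by
    ext ω; simp only [mem_setOf_eq, mem_univ, iff_true]
    exact le_trans (le_trans (le_abs_self _) (hC ω)) hx
  simp [cdfR, this]

lemma cdfR_eq_zero (hC : ∀ ω, |X ω| ≤ C) (hx : x < -C) : cdfR P X x = 0 := by
  have : {ω | X ω ≤ x} = ∅ := by
    ext ω; simp only [mem_setOf_eq, mem_empty_iff_false, iff_false, not_le]
    exact lt_of_lt_of_le hx (neg_le_of_abs_le (hC ω))
  simp [cdfR, this]

lemma quantSet_nonempty (hC : ∀ ω, |X ω| ≤ C) (ht1 : t ≤ 1) :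
    {x : ℝ | t ≤ cdfR P X x}.Nonempty :=
  ⟨C, by simp [cdfR_eq_one P hC le_rfl, ht1]⟩

lemma quantSet_bddBelow (hC : ∀ ω, |X ω| ≤ C) (ht : 0 < t) :
    BddBelow {x : ℝ | t ≤ cdfR P X x} := by
  refine ⟨-C, fun x hx => ?_⟩
  by_contra h
  push_neg at h
  rw [mem_setOf_eq, cdfR_eq_zero P hC h] at hx
  exact absurd (lt_of_lt_of_le ht hx) (lt_irrefl 0)

lemma quantR_le (hC : ∀ ω, |X ω| ≤ C) (ht : 0 < t) (h : t ≤ cdfR P X x) :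
    quantR P X t ≤ x :=
  csInf_le (quantSet_bddBelow P hC ht) h

lemma quantR_le_C (hC : ∀ ω, |X ω| ≤ C) (ht : 0 < t) (ht1 : t ≤ 1) :
    quantR P X t ≤ C :=
  quantR_le P hC ht (by simp [cdfR_eq_one P hC le_rfl, ht1])

lemma neg_C_le_quantR (hC : ∀ ω, |X ω| ≤ C) (ht : 0 < t) (ht1 : t ≤ 1) :
    -C ≤ quantR P X t := by
  refine le_csInf (quantSet_nonempty P hC ht1) (fun x hx => ?_)
  by_contra h
  push_neg at h
  rw [mem_setOf_eq, cdfR_eq_zero P hC h] at hx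
  exact absurd (lt_of_lt_of_le ht hx) (lt_irrefl 0)

lemma le_cdfR_quantR (hX : Measurable X) (hC : ∀ ω, |X ω| ≤ C)
    (ht : 0 < t) (ht1 : t ≤ 1) : t ≤ cdfR P X (quantR P X t) := by
  set m := quantR P X t with hm
  have key : ∀ n : ℕ, t ≤ cdfR P X (m + 1 / (n + 1)) := by
    intro n
    have hlt : m < m + 1 / (n + 1) := by
      have : (0:ℝ) < 1 / (n + 1) := by positivity
      linarith
    obtain ⟨s, hs, hs'⟩ := exists_lt_of_csInf_lt
      (s := {x : ℝ | t ≤ cdfR P X x}) (quantSet_nonempty P hC ht1) hlt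
    exact le_trans hs (cdfR_mono P hs'.le)
  -- pass to the limit
  have hInter : {ω | X ω ≤ m} = ⋂ n : ℕ, {ω | X ω ≤ m + 1 / (n + 1)} := by
    ext ω
    simp only [mem_setOf_eq, mem_iInter]
    constructor
    · intro h n
      have : (0:ℝ) < 1 / (n + 1) := by positivity
      linarith
    · intro h
      by_contra hc
      push_neg at hc
      obtain ⟨n, hn⟩ := exists_nat_one_div_lt (sub_pos.mpr hc)
      have := h n
      linarith [hn]
  have htend : Tendsto (fun n : ℕ => P {ω | X ω ≤ m + 1 / (n + 1)}) atTop
      (𝓝 (P {ω | X ω ≤ m})) := by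
    rw [hInter]
    exact tendsto_measure_iInter_atTop
      (fun n => (hX measurableSet_Iic).nullMeasurableSet)
      (fun a b hab ω hω => by
        simp only [mem_setOf_eq] at *
        have hab' : (a:ℝ) ≤ b := Nat.cast_le.mpr hab
        have : (1:ℝ) / (b + 1) ≤ 1 / (a + 1) := by
          apply one_div_le_one_div_of_le
          · positivity
          · linarith
        linarith)
      ⟨0, measure_ne_top _ _⟩
  have hge : ENNReal.ofReal t ≤ P {ω | X ω ≤ m} := by
    refine ge_of_tendsto htend (Eventually.of_forall (fun n => ?_))
    rw [ENNReal.ofReal_le_iff_le_toReal (measure_ne_top _ _)]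
    exact key n
  rw [cdfR, ← ENNReal.ofReal_le_iff_le_toReal (measure_ne_top _ _)]
  exact hge

lemma quantR_le_iff (hX : Measurable X) (hC : ∀ ω, |X ω| ≤ C)
    (ht : 0 < t) (ht1 : t ≤ 1) : quantR P X t ≤ x ↔ t ≤ cdfR P X x := by
  constructor
  · intro h
    exact le_trans (le_cdfR_quantR P hX hC ht ht1) (cdfR_mono P h)
  · exact quantR_le P hC ht

lemma quantR_monotoneOn (hC : ∀ ω, |X ω| ≤ C) :
    MonotoneOn (quantR P X) (Ioc (0:ℝ) 1) := by
  intro a ha b hb hab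
  exact csInf_le_csInf (quantSet_bddBelow P hC ha.1)
    (quantSet_nonempty P hC hb.2)
    (fun x hx => le_trans hab hx)

end QuantLemmas
section QuantMap

open MeasureTheory Set Filter Topology

variable {Ω : Type*} [MeasurableSpace Ω] (P : Measure Ω) [IsProbabilityMeasure P]
variable {X : Ω → ℝ} {C : ℝ}

lemma quantR_aemeasurable (hX : Measurable X) (hC : ∀ ω, |X ω| ≤ C) :
    AEMeasurable (quantR P X) (volume.restrict (Ioo (0:ℝ) 1)) := by
  set g : ℝ → ℝ := (Ioo (0:ℝ) 1).piecewise (quantR P X) (fun _ => 0) with hg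
  have hgmeas : Measurable g := by
    apply measurable_of_Iic
    intro x
    have : g ⁻¹' Iic x =
        (Ioo (0:ℝ) 1 ∩ Iic (cdfR P X x)) ∪ ((Ioo (0:ℝ) 1)ᶜ ∩ {t : ℝ | (0:ℝ) ≤ x}) := by
      ext t
      by_cases ht : t ∈ Ioo (0:ℝ) 1
      · simp only [hg, mem_preimage, Set.piecewise_eq_of_mem _ _ _ ht, mem_Iic,
          mem_union, mem_inter_iff, ht, true_and, mem_compl_iff, not_true_eq_false,
          false_and, or_false]
        exact quantR_le_iff P hX hC ht.1 ht.2.le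
      · simp only [hg, mem_preimage, Set.piecewise_eq_of_notMem _ _ _ ht, mem_Iic,
          mem_union, mem_inter_iff, ht, false_and, mem_compl_iff, not_false_eq_true,
          true_and, false_or, mem_setOf_eq]
    rw [this]
    by_cases h0 : (0:ℝ) ≤ x
    · have : {t : ℝ | (0:ℝ) ≤ x} = univ := by simp [h0]
      rw [this]
      exact ((measurableSet_Ioo.inter measurableSet_Iic).union
        (measurableSet_Ioo.compl.inter MeasurableSet.univ))
    · have : {t : ℝ | (0:ℝ) ≤ x} = ∅ := by simp [h0]
      rw [this]
      simp only [inter_empty, union_empty]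
      exact measurableSet_Ioo.inter measurableSet_Iic
  refine ⟨g, hgmeas, ?_⟩
  filter_upwards [ae_restrict_mem measurableSet_Ioo] with t ht
  simp [hg, Set.piecewise_eq_of_mem _ _ _ ht]

lemma volume_Iic_inter_Ioo01 {b : ℝ} (hb0 : 0 ≤ b) (hb1 : b ≤ 1) :
    volume (Iic b ∩ Ioo (0:ℝ) 1) = ENNReal.ofReal b := by
  rcases eq_or_lt_of_le hb1 with rfl | hb1
  · have : Iic (1:ℝ) ∩ Ioo (0:ℝ) 1 = Ioo (0:ℝ) 1 := by
      ext t; simp only [mem_inter_iff, mem_Iic, mem_Ioo]; constructor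
      · tauto
      · intro h; exact ⟨h.2.le, h⟩
    rw [this, Real.volume_Ioo]; norm_num
  · have : Iic b ∩ Ioo (0:ℝ) 1 = Ioc (0:ℝ) b := by
      ext t; simp only [mem_inter_iff, mem_Iic, mem_Ioo, mem_Ioc]
      constructor
      · rintro ⟨h1, h2, _⟩; exact ⟨h2, h1⟩
      · rintro ⟨h1, h2⟩; exact ⟨h2, h1, lt_of_le_of_lt h2 hb1⟩
    rw [this, Real.volume_Ioc]; norm_num

lemma map_quantR (hX : Measurable X) (hC : ∀ ω, |X ω| ≤ C) :
    (volume.restrict (Ioo (0:ℝ) 1)).map (quantR P X) = P.map X := by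
  have hq := quantR_aemeasurable P hX hC
  have hfin : IsFiniteMeasure ((volume.restrict (Ioo (0:ℝ) 1)).map (quantR P X)) := by
    constructor
    rw [Measure.map_apply_of_aemeasurable hq MeasurableSet.univ]
    simp only [preimage_univ]
    rw [Measure.restrict_apply_univ, Real.volume_Ioo]
    norm_num
  refine Measure.ext_of_Iic _ _ (fun a => ?_)
  rw [Measure.map_apply_of_aemeasurable hq measurableSet_Iic,
    Measure.map_apply hX measurableSet_Iic,
    Measure.restrict_apply' measurableSet_Ioo]
  have hpre : quantR P X ⁻¹' Iic a ∩ Ioo (0:ℝ) 1 = Iic (cdfR P X a) ∩ Ioo (0:ℝ) 1 := by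
    ext t
    simp only [mem_inter_iff, mem_preimage, mem_Iic]
    constructor
    · rintro ⟨h1, h2⟩
      exact ⟨(quantR_le_iff P hX hC h2.1 h2.2.le).mp h1, h2⟩
    · rintro ⟨h1, h2⟩
      exact ⟨(quantR_le_iff P hX hC h2.1 h2.2.le).mpr h1, h2⟩
  rw [hpre, volume_Iic_inter_Ioo01 (b := cdfR P X a) (by exact ENNReal.toReal_nonneg) (by
    have : P {ω | X ω ≤ a} ≤ 1 := by
      rw [← measure_univ (μ := P)]; exact measure_mono (subset_univ _)
    calc (P {ω | X ω ≤ a}).toReal ≤ (1 : ENNReal).toReal :=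
      ENNReal.toReal_mono (by norm_num) this
    _ = 1 := by norm_num)]
  have : X ⁻¹' Iic a = {ω | X ω ≤ a} := rfl
  rw [this, cdfR, ENNReal.ofReal_toReal (measure_ne_top _ _)]

lemma integral_quantR (hX : Measurable X) (hC : ∀ ω, |X ω| ≤ C) :
    ∫ t in Ioo (0:ℝ) 1, quantR P X t = ∫ ω, X ω ∂P := by
  have h1 : ∫ x, id x ∂((volume.restrict (Ioo (0:ℝ) 1)).map (quantR P X)) =
      ∫ t in Ioo (0:ℝ) 1, quantR P X t := by
    rw [integral_map (quantR_aemeasurable P hX hC) aestronglyMeasurable_id]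
    rfl
  have h2 : ∫ x, id x ∂(P.map X) = ∫ ω, X ω ∂P := by
    rw [integral_map hX.aemeasurable aestronglyMeasurable_id]
    rfl
  rw [← h1, map_quantR P hX hC, h2]

end QuantMap
section AnalysisLemmas

open MeasureTheory Set Filter Topology

lemma conjW_hasDerivAt {T : ℝ → ℝ} {t : ℝ} (h : DifferentiableAt ℝ T (1 - t)) :
    HasDerivAt (conjW T) (deriv T (1 - t)) t := by
  have h1 : HasDerivAt (fun s : ℝ => 1 - s) (-1) t := (hasDerivAt_id t).const_sub 1
  have h2 : HasDerivAt (fun s : ℝ => T (1 - s)) (deriv T (1 - t) * (-1)) t :=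
    (h.hasDerivAt).comp t h1
  have h3 : HasDerivAt (fun s : ℝ => 1 - T (1 - s)) (-(deriv T (1 - t) * (-1))) t :=
    h2.const_sub 1
  unfold conjW
  simpa using h3

lemma deriv_conjW {T : ℝ → ℝ} {t : ℝ} (h : DifferentiableAt ℝ T (1 - t)) :
    deriv (conjW T) t = deriv T (1 - t) :=
  (conjW_hasDerivAt h).deriv

lemma one_sub_mem_Icc {t : ℝ} (ht : t ∈ Icc (0:ℝ) 1) : 1 - t ∈ Icc (0:ℝ) 1 :=
  ⟨by linarith [ht.2], by linarith [ht.1]⟩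

lemma derivT_contOn {T : ℝ → ℝ} (hT : IsPWF T) :
    ContinuousOn (deriv T) (Icc (0:ℝ) 1) := fun x hx =>
  ((hT.2.2.2.1 x hx).continuousAt).continuousWithinAt

lemma deriv_conjW_contOn {T : ℝ → ℝ} (hT : IsPWF T) :
    ContinuousOn (deriv (conjW T)) (Icc (0:ℝ) 1) := by
  have : ContinuousOn (fun t => deriv T (1 - t)) (Icc (0:ℝ) 1) :=
    (derivT_contOn hT).comp (by fun_prop) (fun t ht => one_sub_mem_Icc ht)
  exact this.congr (fun t ht => deriv_conjW (hT.2.2.1 _ (one_sub_mem_Icc ht)))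

lemma integral_deriv_conjW {T : ℝ → ℝ} (hT : IsPWF T) :
    ∫ t in Ioo (0:ℝ) 1, deriv (conjW T) t = 1 := by
  rw [← integral_Ioc_eq_integral_Ioo, ← intervalIntegral.integral_of_le zero_le_one]
  have hdiff : ∀ x ∈ uIcc (0:ℝ) 1, DifferentiableAt ℝ (conjW T) x := by
    intro x hx
    rw [Set.uIcc_of_le zero_le_one] at hx
    exact (conjW_hasDerivAt (hT.2.2.1 _ (one_sub_mem_Icc hx))).differentiableAt
  have hcont : IntervalIntegrable (deriv (conjW T)) volume 0 1 := by
    apply ContinuousOn.intervalIntegrable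
    rw [Set.uIcc_of_le zero_le_one]
    exact deriv_conjW_contOn hT
  rw [intervalIntegral.integral_deriv_eq_sub hdiff hcont]
  simp [conjW, hT.2.2.2.2.1, hT.2.2.2.2.2]

lemma utility_deriv_pos {u : ℝ → ℝ} (hu : IsUtility u) (x : ℝ) : 0 < deriv u x := by
  have hconc : ConcaveOn ℝ univ u := hu.2.2.1.concaveOn
  have h := hconc.slope_le_deriv (mem_univ x) (mem_univ (x + 1)) (by linarith) (hu.1 x)
  have hslope : 0 < slope u x (x + 1) := by
    rw [slope_def_field]
    have := hu.2.2.2 (show x < x + 1 by linarith)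
    have h1 : x + 1 - x = 1 := by ring
    rw [h1, div_one]
    linarith
  linarith

lemma utility_tangent {u : ℝ → ℝ} (hu : IsUtility u) (c y : ℝ) :
    u y ≤ u c + deriv u c * (y - c) := by
  have hconc : ConcaveOn ℝ univ u := hu.2.2.1.concaveOn
  rcases lt_trichotomy y c with h | h | h
  · have hd := hconc.deriv_le_slope (mem_univ y) (mem_univ c) h (hu.1 c)
    rw [slope_def_field] at hd
    have hcy : 0 < c - y := by linarith
    rw [le_div_iff₀ hcy] at hd
    nlinarith
  · subst h; simp
  · have hd := hconc.slope_le_deriv (mem_univ c) (mem_univ y) h (hu.1 c)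
    rw [slope_def_field] at hd
    have hyc : 0 < y - c := by linarith
    rw [div_le_iff₀ hyc] at hd
    nlinarith

end AnalysisLemmas
section Chebyshev

open MeasureTheory Set Filter Topology

lemma isProb_restrict_Ioo01 :
    IsProbabilityMeasure (volume.restrict (Ioo (0:ℝ) 1)) := by
  constructor
  rw [Measure.restrict_apply_univ, Real.volume_Ioo]
  norm_num

lemma chebyshev_Ioo {f g : ℝ → ℝ}
    (hf : MonotoneOn f (Ioo (0:ℝ) 1)) (hg : AntitoneOn g (Ioo (0:ℝ) 1))
    (hfi : Integrable f (volume.restrict (Ioo (0:ℝ) 1)))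
    (hgi : Integrable g (volume.restrict (Ioo (0:ℝ) 1)))
    (hfgi : Integrable (fun t => f t * g t) (volume.restrict (Ioo (0:ℝ) 1))) :
    ∫ t in Ioo (0:ℝ) 1, f t * g t ≤
      (∫ t in Ioo (0:ℝ) 1, f t) * ∫ t in Ioo (0:ℝ) 1, g t := by
  set μ := volume.restrict (Ioo (0:ℝ) 1) with hμ
  haveI : IsProbabilityMeasure μ := isProb_restrict_Ioo01
  have hprod : μ.prod μ = (volume.prod volume).restrict (Ioo (0:ℝ) 1 ×ˢ Ioo (0:ℝ) 1) :=
    Measure.prod_restrict _ _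
  -- integrability of the four terms
  have hA : Integrable (fun z : ℝ × ℝ => f z.1 * g z.2) (μ.prod μ) := hfi.mul_prod hgi
  have hB : Integrable (fun z : ℝ × ℝ => f z.1 * g z.1) (μ.prod μ) := by
    have := hfgi.mul_prod (integrable_const (1:ℝ)) (ν := μ)
    simpa using this
  have hC : Integrable (fun z : ℝ × ℝ => f z.2 * g z.2) (μ.prod μ) := by
    have := (integrable_const (1:ℝ)).mul_prod hfgi (μ := μ)
    simpa using this
  have hD : Integrable (fun z : ℝ × ℝ => f z.2 * g z.1) (μ.prod μ) := by
    have := hgi.mul_prod hfi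
    simpa [mul_comm] using this
  -- pointwise nonnegativity a.e.
  have hptwise : 0 ≤ ∫ z, (f z.1 - f z.2) * (g z.2 - g z.1) ∂(μ.prod μ) := by
    apply integral_nonneg_of_ae
    have hmem : ∀ᵐ z ∂(μ.prod μ), z ∈ Ioo (0:ℝ) 1 ×ˢ Ioo (0:ℝ) 1 := by
      rw [hprod]
      exact ae_restrict_mem (measurableSet_Ioo.prod measurableSet_Ioo)
    filter_upwards [hmem] with z hz
    show (0:ℝ) ≤ (f z.1 - f z.2) * (g z.2 - g z.1)
    obtain ⟨hz1, hz2⟩ := hz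
    rcases le_total z.1 z.2 with h | h
    · have h1 : f z.1 - f z.2 ≤ 0 := sub_nonpos.mpr (hf hz1 hz2 h)
      have h2 : g z.2 - g z.1 ≤ 0 := sub_nonpos.mpr (hg hz1 hz2 h)
      nlinarith
    · have h1 : 0 ≤ f z.1 - f z.2 := sub_nonneg.mpr (hf hz2 hz1 h)
      have h2 : 0 ≤ g z.2 - g z.1 := sub_nonneg.mpr (hg hz2 hz1 h)
      exact mul_nonneg h1 h2
  -- expand the integral
  have hexp : (fun z : ℝ × ℝ => (f z.1 - f z.2) * (g z.2 - g z.1)) =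
      fun z => (f z.1 * g z.2 - f z.1 * g z.1) - (f z.2 * g z.2 - f z.2 * g z.1) := by
    funext z; ring
  rw [hexp] at hptwise
  have h12 : Integrable (fun z : ℝ × ℝ => f z.1 * g z.2 - f z.1 * g z.1) (μ.prod μ) :=
    hA.sub hB
  have h34 : Integrable (fun z : ℝ × ℝ => f z.2 * g z.2 - f z.2 * g z.1) (μ.prod μ) :=
    hC.sub hD
  simp only [integral_sub h12 h34, integral_sub hA hB, integral_sub hC hD] at hptwise
  have e1 : ∫ z : ℝ × ℝ, f z.1 * g z.2 ∂(μ.prod μ) = (∫ t, f t ∂μ) * ∫ t, g t ∂μ :=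
    integral_prod_mul f g
  have e2 : ∫ z : ℝ × ℝ, f z.1 * g z.1 ∂(μ.prod μ) = ∫ t, f t * g t ∂μ := by
    rw [integral_fun_fst (f := fun t => f t * g t)]
    simp
  have e3 : ∫ z : ℝ × ℝ, f z.2 * g z.2 ∂(μ.prod μ) = ∫ t, f t * g t ∂μ := by
    rw [integral_fun_snd (f := fun t => f t * g t)]
    simp
  have e4 : ∫ z : ℝ × ℝ, f z.2 * g z.1 ∂(μ.prod μ) = (∫ t, f t ∂μ) * ∫ t, g t ∂μ := by
    have : (fun z : ℝ × ℝ => f z.2 * g z.1) = fun z : ℝ × ℝ => g z.1 * f z.2 := by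
      funext z; ring
    rw [this, integral_prod_mul g f]
    ring
  rw [e1, e2, e3, e4] at hptwise
  linarith

end Chebyshev
section Bounds

open MeasureTheory Set Filter Topology

variable {Ω : Type*} [MeasurableSpace Ω] (P : Measure Ω) [IsProbabilityMeasure P]

lemma EUf_const (u : ℝ → ℝ) (c : ℝ) : EUf P u (fun _ => c) = u c := by
  simp [EUf]

lemma quantR_const (c : ℝ) {t : ℝ} (ht : t ∈ Ioc (0:ℝ) 1) :
    quantR P (fun _ : Ω => c) t = c := by
  have hset : {x : ℝ | t ≤ cdfR P (fun _ : Ω => c) x} = Ici c := by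
    ext x
    simp only [mem_setOf_eq, mem_Ici, cdfR]
    by_cases h : c ≤ x
    · have h1 : {ω : Ω | (fun _ : Ω => c) ω ≤ x} = univ := eq_univ_of_forall (fun _ => h)
      rw [h1]
      simp only [measure_univ, ENNReal.toReal_one]
      exact ⟨fun _ => h, fun _ => ht.2⟩
    · have h1 : {ω : Ω | (fun _ : Ω => c) ω ≤ x} = ∅ := by
        ext ω; simp only [mem_setOf_eq, mem_empty_iff_false, iff_false]; exact h
      rw [h1]
      simp only [measure_empty, ENNReal.toReal_zero]
      constructor
      · intro hle; exact absurd (lt_of_lt_of_le ht.1 hle) (lt_irrefl 0)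
      · intro hle; exact absurd hle h
  rw [quantR, hset, csInf_Ici]

lemma RDUf_const {T : ℝ → ℝ} (hT : IsPWF T) (u : ℝ → ℝ) (c : ℝ) :
    RDUf P u (conjW T) (fun _ : Ω => c) = u c := by
  rw [RDUf]
  have : ∫ t in Ioo (0:ℝ) 1, u (quantR P (fun _ : Ω => c) t) * deriv (conjW T) t
      = ∫ t in Ioo (0:ℝ) 1, u c * deriv (conjW T) t := by
    apply integral_congr_ae
    filter_upwards [ae_restrict_mem measurableSet_Ioo] with t ht
    rw [quantR_const P c ⟨ht.1, ht.2.le⟩]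
  rw [this, integral_const_mul, integral_deriv_conjW hT, mul_one]

lemma bddRV_integrable {X : Ω → ℝ} {C : ℝ} (hX : Measurable X) (hC : ∀ ω, |X ω| ≤ C) :
    Integrable X P := by
  refine Integrable.mono' (integrable_const C) hX.aestronglyMeasurable ?_
  exact ae_of_all _ (fun ω => by simpa [Real.norm_eq_abs] using hC ω)

lemma utility_continuous {u : ℝ → ℝ} (hu : IsUtility u) : Continuous u :=
  continuous_iff_continuousAt.mpr (fun x => (hu.1 x).continuousAt)

lemma comp_bdd_integrable {u X : _} {C : ℝ} (hu : IsUtility u) (hX : Measurable X)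
    (hC : ∀ ω : Ω, |X ω| ≤ C) : Integrable (fun ω => u (X ω)) P := by
  refine Integrable.mono' (integrable_const (max |u C| |u (-C)|))
    ((utility_continuous hu).measurable.comp hX).aestronglyMeasurable ?_
  refine ae_of_all _ (fun ω => ?_)
  rw [Real.norm_eq_abs, abs_le]
  have h1 : X ω ≤ C := le_trans (le_abs_self _) (hC ω)
  have h2 : -C ≤ X ω := neg_le_of_abs_le (hC ω)
  have hm := hu.2.2.2.monotone
  constructor
  · calc -(max |u C| |u (-C)|) ≤ -|u (-C)| := by
          simp only [neg_le_neg_iff]; exact le_max_right _ _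
      _ ≤ u (-C) := neg_abs_le _
      _ ≤ u (X ω) := hm h2
  · calc u (X ω) ≤ u C := hm h1
      _ ≤ |u C| := le_abs_self _
      _ ≤ max |u C| |u (-C)| := le_max_left _ _

lemma EUf_le_tangent {u X : _} {C : ℝ} (hu : IsUtility u) (hX : Measurable X)
    (hC : ∀ ω : Ω, |X ω| ≤ C) (c : ℝ) :
    EUf P u X ≤ u c + deriv u c * ((∫ ω, X ω ∂P) - c) := by
  have hXi : Integrable X P := bddRV_integrable P hX hC
  have huX : Integrable (fun ω => u (X ω)) P := comp_bdd_integrable P hu hX hC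
  have hRHS : Integrable (fun ω => u c + deriv u c * (X ω - c)) P :=
    (integrable_const _).add ((hXi.sub (integrable_const c)).const_mul _)
  calc EUf P u X = ∫ ω, u (X ω) ∂P := rfl
    _ ≤ ∫ ω, (u c + deriv u c * (X ω - c)) ∂P :=
        integral_mono huX hRHS (fun ω => utility_tangent hu c (X ω))
    _ = u c + deriv u c * ((∫ ω, X ω ∂P) - c) := by
        have h1 : Integrable (fun _ : Ω => u c) P := integrable_const _
        have h2 : Integrable (fun ω => deriv u c * (X ω - c)) P :=
          ((hXi.sub (integrable_const c)).const_mul _)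
        have h3 : Integrable (fun ω => X ω - c) P := hXi.sub (integrable_const c)
        rw [integral_add h1 h2, integral_const_mul, integral_sub hXi (integrable_const c),
          integral_const]
        simp [measure_univ]

lemma RDUf_le_tangent {T u X : _} {C : ℝ} (hT : IsPWF T)
    (hTc : ConvexOn ℝ (Icc (0:ℝ) 1) T) (hu : IsUtility u)
    (hX : Measurable X) (hC : ∀ ω : Ω, |X ω| ≤ C) (c : ℝ) :
    RDUf P u (conjW T) X ≤ u c + deriv u c * ((∫ ω, X ω ∂P) - c) := by
  set μ := volume.restrict (Ioo (0:ℝ) 1) with hμdef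
  haveI : IsProbabilityMeasure μ := isProb_restrict_Ioo01
  set q := quantR P X with hqdef
  obtain ⟨K, hK0, hKb⟩ : ∃ K : ℝ, 0 ≤ K ∧ ∀ ω, |X ω| ≤ K :=
    ⟨|C|, abs_nonneg C, fun ω => (hC ω).trans (le_abs_self C)⟩
  set D := deriv (conjW T) with hDdef
  have hq_meas : AEMeasurable q μ := quantR_aemeasurable P hX hC
  have hD_meas : Measurable D := measurable_deriv _
  have hqb : ∀ t ∈ Ioo (0:ℝ) 1, -K ≤ q t ∧ q t ≤ K := by
    intro t ht
    constructor
    · exact neg_C_le_quantR P hKb ht.1 ht.2.le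
    · exact quantR_le_C P hKb ht.1 ht.2.le
  have hder_mono : MonotoneOn (deriv T) (Icc (0:ℝ) 1) :=
    hTc.monotoneOn_deriv (fun x hx => hT.2.2.1 x hx)
  have hD_eq : ∀ t ∈ Icc (0:ℝ) 1, D t = deriv T (1 - t) := by
    intro t ht
    exact deriv_conjW (hT.2.2.1 _ (one_sub_mem_Icc ht))
  have hD_nonneg : ∀ t ∈ Ioo (0:ℝ) 1, 0 ≤ D t := by
    intro t ht
    rw [hD_eq t ⟨ht.1.le, ht.2.le⟩]
    have h1t : 1 - t ∈ Ioo (0:ℝ) 1 := ⟨by linarith [ht.2], by linarith [ht.1]⟩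
    have hs := hTc.slope_le_deriv (x := 0) (y := 1 - t)
      (by simp [mem_Icc]) ⟨h1t.1.le, h1t.2.le⟩ h1t.1
      (hT.2.2.1 _ ⟨h1t.1.le, h1t.2.le⟩)
    rw [slope_def_field] at hs
    have hTnn : 0 ≤ T (1 - t) := (hT.1 _ ⟨h1t.1.le, h1t.2.le⟩).1
    have : 0 ≤ (T (1 - t) - T 0) / (1 - t - 0) := by
      apply div_nonneg
      · rw [hT.2.2.2.2.1]; linarith
      · linarith [h1t.1]
    linarith
  have hD_le : ∀ t ∈ Ioo (0:ℝ) 1, D t ≤ deriv T 1 := by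
    intro t ht
    rw [hD_eq t ⟨ht.1.le, ht.2.le⟩]
    exact hder_mono ⟨by linarith [ht.2], by linarith [ht.1]⟩ (by simp [mem_Icc]) (by linarith [ht.1])
  have hDi : Integrable D μ := by
    refine Integrable.mono' (integrable_const (deriv T 1)) hD_meas.aestronglyMeasurable ?_
    filter_upwards [ae_restrict_mem measurableSet_Ioo] with t ht
    rw [Real.norm_eq_abs, abs_of_nonneg (hD_nonneg t ht)]
    exact hD_le t ht
  have hqi : Integrable q μ := by
    refine Integrable.mono' (integrable_const K) hq_meas.aestronglyMeasurable ?_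
    filter_upwards [ae_restrict_mem measurableSet_Ioo] with t ht
    rw [Real.norm_eq_abs, abs_le]
    exact hqb t ht
  have hu_cont : Continuous u := utility_continuous hu
  have huq_meas : AEMeasurable (fun t => u (q t)) μ := hu_cont.measurable.comp_aemeasurable hq_meas
  have huq_bdd : ∀ t ∈ Ioo (0:ℝ) 1, |u (q t)| ≤ max |u K| |u (-K)| := by
    intro t ht
    rw [abs_le]
    have hm := hu.2.2.2.monotone
    obtain ⟨hb1, hb2⟩ := hqb t ht
    constructor
    · calc -(max |u K| |u (-K)|) ≤ -|u (-K)| := by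
            simp only [neg_le_neg_iff]; exact le_max_right _ _
        _ ≤ u (-K) := neg_abs_le _
        _ ≤ u (q t) := hm hb1
    · calc u (q t) ≤ u K := hm hb2
        _ ≤ |u K| := le_abs_self _
        _ ≤ _ := le_max_left _ _
  have hqD : Integrable (fun t => q t * D t) μ := by
    refine Integrable.mono' (integrable_const (K * deriv T 1))
      (hq_meas.mul hD_meas.aemeasurable).aestronglyMeasurable ?_
    filter_upwards [ae_restrict_mem measurableSet_Ioo] with t ht
    rw [Real.norm_eq_abs, abs_mul]
    have h1 : |q t| ≤ K := abs_le.mpr (hqb t ht)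
    have h2 : |D t| ≤ deriv T 1 := by
      rw [abs_of_nonneg (hD_nonneg t ht)]; exact hD_le t ht
    exact mul_le_mul h1 h2 (abs_nonneg _) hK0
  have huqD : Integrable (fun t => u (q t) * D t) μ := by
    refine Integrable.mono' (integrable_const (max |u K| |u (-K)| * deriv T 1))
      (huq_meas.mul hD_meas.aemeasurable).aestronglyMeasurable ?_
    filter_upwards [ae_restrict_mem measurableSet_Ioo] with t ht
    rw [Real.norm_eq_abs, abs_mul]
    have h2 : |D t| ≤ deriv T 1 := by
      rw [abs_of_nonneg (hD_nonneg t ht)]; exact hD_le t ht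
    exact mul_le_mul (huq_bdd t ht) h2 (abs_nonneg _) ((abs_nonneg _).trans (huq_bdd t ht))
  have hintD : ∫ t, D t ∂μ = 1 := integral_deriv_conjW hT
  -- Chebyshev
  have hq_mono : MonotoneOn q (Ioo (0:ℝ) 1) :=
    (quantR_monotoneOn P hC).mono Ioo_subset_Ioc_self
  have hD_anti : AntitoneOn D (Ioo (0:ℝ) 1) := by
    intro s hs t ht hst
    rw [hD_eq s ⟨hs.1.le, hs.2.le⟩, hD_eq t ⟨ht.1.le, ht.2.le⟩]
    exact hder_mono ⟨by linarith [ht.2], by linarith [ht.1]⟩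
      ⟨by linarith [hs.2], by linarith [hs.1]⟩ (by linarith)
  have hcheb : ∫ t, q t * D t ∂μ ≤ (∫ t, q t ∂μ) * ∫ t, D t ∂μ :=
    chebyshev_Ioo hq_mono hD_anti hqi hDi hqD
  have hEq : ∫ t, q t ∂μ = ∫ ω, X ω ∂P := integral_quantR P hX hC
  have hqD_le : ∫ t, q t * D t ∂μ ≤ ∫ ω, X ω ∂P := by
    rw [hintD, mul_one] at hcheb
    rw [← hEq]; exact hcheb
  -- main chain
  have hRHSi1 : Integrable (fun t => (u c - deriv u c * c) * D t) μ := hDi.const_mul _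
  have hRHSi2 : Integrable (fun t => deriv u c * (q t * D t)) μ := hqD.const_mul _
  have hRHSi : Integrable (fun t => (u c - deriv u c * c) * D t + deriv u c * (q t * D t)) μ :=
    hRHSi1.add hRHSi2
  have hstep : RDUf P u (conjW T) X ≤
      ∫ t, ((u c - deriv u c * c) * D t + deriv u c * (q t * D t)) ∂μ := by
    rw [RDUf]
    apply integral_mono_ae huqD hRHSi
    filter_upwards [ae_restrict_mem measurableSet_Ioo] with t ht
    have htang : u (q t) ≤ u c + deriv u c * (q t - c) := utility_tangent hu c (q t)
    have hmul := mul_le_mul_of_nonneg_right htang (hD_nonneg t ht)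
    calc u (q t) * D t ≤ (u c + deriv u c * (q t - c)) * D t := hmul
      _ = (u c - deriv u c * c) * D t + deriv u c * (q t * D t) := by ring
  have hval : ∫ t, ((u c - deriv u c * c) * D t + deriv u c * (q t * D t)) ∂μ
      = (u c - deriv u c * c) + deriv u c * ∫ t, q t * D t ∂μ := by
    rw [integral_add hRHSi1 hRHSi2, integral_const_mul, integral_const_mul, hintD, mul_one]
  have hupos : 0 < deriv u c := utility_deriv_pos hu c
  calc RDUf P u (conjW T) X
      ≤ (u c - deriv u c * c) + deriv u c * ∫ t, q t * D t ∂μ := by rw [← hval]; exact hstep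
    _ ≤ (u c - deriv u c * c) + deriv u c * ∫ ω, X ω ∂P := by
        have := mul_le_mul_of_nonneg_left hqD_le hupos.le
        linarith
    _ = u c + deriv u c * ((∫ ω, X ω ∂P) - c) := by ring

end Bounds

noncomputable section

open MeasureTheory Set

/-- Utilitarian welfare: agent `0` is the RDU agent (unweighted), agents `i ≠ 0` are
EU agents with weights `lam i`. -/
def welfareW {Ω : Type*} [MeasurableSpace Ω] (P : Measure Ω) {n : ℕ}
    (u : Fin (n + 1) → ℝ → ℝ) (T : ℝ → ℝ) (lam : Fin (n + 1) → ℝ)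
    (X : Fin (n + 1) → Ω → ℝ) : ℝ :=
  RDUf P (u 0) (conjW T) (X 0) +
    ∑ i ∈ Finset.univ.erase 0, lam i * EUf P (u i) (X i)

/-- In an economy with one RDU agent (agent `0`) and `n` EU agents sharing
the common belief `P`, with no aggregate uncertainty:
(i) every maximizer of the weighted utilitarian welfare over `A(w)` is Pareto optimal;
(ii) if `T` is convex on `[0,1]`, every Pareto-optimal allocation in `A(w)` maximizes the
weighted utilitarian welfare for some strictly positive weight vector. -/
theorem statement0
    {Ω : Type*} [MeasurableSpace Ω] (P : Measure Ω) [IsProbabilityMeasure P]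
    (hP : NonatomicM P)
    (n : ℕ) (hn : 1 ≤ n)
    (T : ℝ → ℝ) (hT : IsPWF T)
    (u : Fin (n + 1) → ℝ → ℝ) (hu : ∀ i, IsUtility (u i))
    (w : ℝ) :
    (∀ lam : Fin (n + 1) → ℝ, (∀ i, i ≠ 0 → 0 < lam i) →
      ∀ X : Fin (n + 1) → Ω → ℝ, AllocC P w X →
        (∀ X' : Fin (n + 1) → Ω → ℝ, AllocC P w X' →
          welfareW P u T lam X' ≤ welfareW P u T lam X) →
        ¬ ∃ X' : Fin (n + 1) → Ω → ℝ, AllocC P w X' ∧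
          (∀ i, (if i = 0 then RDUf P (u 0) (conjW T) else EUf P (u i)) (X i) ≤
            (if i = 0 then RDUf P (u 0) (conjW T) else EUf P (u i)) (X' i)) ∧
          ∃ i, (if i = 0 then RDUf P (u 0) (conjW T) else EUf P (u i)) (X i) <
            (if i = 0 then RDUf P (u 0) (conjW T) else EUf P (u i)) (X' i))
    ∧
    (ConvexOn ℝ (Icc (0:ℝ) 1) T →
      ∀ X : Fin (n + 1) → Ω → ℝ, AllocC P w X →
        (¬ ∃ X' : Fin (n + 1) → Ω → ℝ, AllocC P w X' ∧
          (∀ i, (if i = 0 then RDUf P (u 0) (conjW T) else EUf P (u i)) (X i) ≤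
            (if i = 0 then RDUf P (u 0) (conjW T) else EUf P (u i)) (X' i)) ∧
          ∃ i, (if i = 0 then RDUf P (u 0) (conjW T) else EUf P (u i)) (X i) <
            (if i = 0 then RDUf P (u 0) (conjW T) else EUf P (u i)) (X' i)) →
        ∃ lam : Fin (n + 1) → ℝ, (∀ i, i ≠ 0 → 0 < lam i) ∧
          ∀ X' : Fin (n + 1) → Ω → ℝ, AllocC P w X' →
            welfareW P u T lam X' ≤ welfareW P u T lam X) := by
  constructor
  · -- Part (i): welfare maximizers are Pareto optimal
    intro lam hlam X hX hmax
    rintro ⟨X', hX', hge, i0, hlt⟩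
    have hterm : ∀ i ∈ Finset.univ.erase (0 : Fin (n+1)),
        lam i * EUf P (u i) (X i) ≤ lam i * EUf P (u i) (X' i) := by
      intro i hi
      have hi0 : i ≠ 0 := (Finset.mem_erase.mp hi).1
      have h := hge i
      rw [if_neg hi0] at h
      exact mul_le_mul_of_nonneg_left h (hlam i hi0).le
    have hR : RDUf P (u 0) (conjW T) (X 0) ≤ RDUf P (u 0) (conjW T) (X' 0) := by
      have h := hge 0
      rwa [if_pos rfl] at h
    have hstrict : welfareW P u T lam X < welfareW P u T lam X' := by
      by_cases h0 : i0 = 0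
      · subst h0
        rw [if_pos rfl] at hlt
        exact add_lt_add_of_lt_of_le hlt (Finset.sum_le_sum hterm)
      · rw [if_neg h0] at hlt
        refine add_lt_add_of_le_of_lt hR ?_
        refine Finset.sum_lt_sum hterm ⟨i0, Finset.mem_erase.mpr ⟨h0, Finset.mem_univ _⟩, ?_⟩
        exact mul_lt_mul_of_pos_left hlt (hlam i0 h0)
    exact absurd (hmax X' hX') (not_le.mpr hstrict)
  · -- Part (ii): Pareto optimal allocations are welfare maximizers
    intro hTconv X hX hpareto
    have hXb : ∀ i, Measurable (X i) := fun i => (hX.1 i).1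
    have hXC : ∀ i, ∃ C, ∀ ω, |X i ω| ≤ C := fun i => (hX.1 i).2
    choose Cb hCb using hXC
    have hXint : ∀ i, Integrable (X i) P := fun i => bddRV_integrable P (hXb i) (hCb i)
    set c : Fin (n+1) → ℝ := fun i => ∫ ω, X i ω ∂P with hc
    have hsumc : ∑ i, c i = w := by
      have h1 : ∫ ω, (∑ i, X i ω) ∂P = ∑ i, c i := by
        rw [integral_finset_sum Finset.univ (fun i _ => hXint i)]
      have h2 : ∫ ω, (∑ i, X i ω) ∂P = ∫ ω, (fun _ : Ω => w) ω ∂P :=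
        integral_congr_ae hX.2
      rw [h1] at h2
      rw [h2]
      simp [measure_univ]
    -- the constant allocation
    set Y : Fin (n+1) → Ω → ℝ := fun i => fun _ => c i with hY
    have hYalloc : AllocC P w Y := by
      constructor
      · intro i
        exact ⟨measurable_const, |c i|, fun ω => le_refl _⟩
      · exact Filter.Eventually.of_forall (fun ω => hsumc)
    -- upper bounds by constants
    have hub : ∀ i : Fin (n+1),
        (if i = 0 then RDUf P (u 0) (conjW T) else EUf P (u i)) (X i) ≤
        (if i = 0 then RDUf P (u 0) (conjW T) else EUf P (u i)) (Y i) := by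
      intro i
      by_cases h0 : i = 0
      · subst h0
        rw [if_pos rfl, RDUf_const P hT (u 0) (c 0)]
        have := RDUf_le_tangent P hT hTconv (hu 0) (hXb 0) (hCb 0) (c 0)
        simpa [hc] using this
      · rw [if_neg h0, EUf_const P (u i) (c i)]
        have := EUf_le_tangent P (hu i) (hXb i) (hCb i) (c i)
        simpa [hc] using this
    -- Pareto optimality forces equalities
    have heq : ∀ i : Fin (n+1),
        (if i = 0 then RDUf P (u 0) (conjW T) else EUf P (u i)) (X i) =
        (if i = 0 then RDUf P (u 0) (conjW T) else EUf P (u i)) (Y i) := by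
      by_contra h
      push_neg at h
      obtain ⟨i, hi⟩ := h
      exact hpareto ⟨Y, hYalloc, hub, i, lt_of_le_of_ne (hub i) hi⟩
    have heq0 : RDUf P (u 0) (conjW T) (X 0) = u 0 (c 0) := by
      have h := heq 0
      rw [if_pos rfl] at h
      rw [h]
      exact RDUf_const P hT (u 0) (c 0)
    have heqi : ∀ i : Fin (n+1), i ≠ 0 → EUf P (u i) (X i) = u i (c i) := by
      intro i h0
      have h := heq i
      rw [if_neg h0] at h
      rw [h]
      exact EUf_const P (u i) (c i)
    -- the weight vector
    set A : ℝ := deriv (u 0) (c 0) with hA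
    have hApos : 0 < A := utility_deriv_pos (hu 0) (c 0)
    set lam : Fin (n+1) → ℝ := fun i => A / deriv (u i) (c i) with hlamdef
    have hdpos : ∀ i : Fin (n+1), 0 < deriv (u i) (c i) :=
      fun i => utility_deriv_pos (hu i) (c i)
    have hlampos : ∀ i : Fin (n+1), 0 < lam i := fun i => div_pos hApos (hdpos i)
    have hlammul : ∀ i : Fin (n+1), lam i * deriv (u i) (c i) = A :=
      fun i => div_mul_cancel₀ A (hdpos i).ne'
    refine ⟨lam, fun i _ => hlampos i, ?_⟩
    intro X' hX'
    have hX'b : ∀ i, Measurable (X' i) := fun i => (hX'.1 i).1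
    choose C'b hC'b using fun i => (hX'.1 i).2
    have hX'int : ∀ i, Integrable (X' i) P := fun i => bddRV_integrable P (hX'b i) (hC'b i)
    set c' : Fin (n+1) → ℝ := fun i => ∫ ω, X' i ω ∂P with hc'
    have hsumc' : ∑ i, c' i = w := by
      have h1 : ∫ ω, (∑ i, X' i ω) ∂P = ∑ i, c' i := by
        rw [integral_finset_sum Finset.univ (fun i _ => hX'int i)]
      have h2 : ∫ ω, (∑ i, X' i ω) ∂P = ∫ ω, (fun _ : Ω => w) ω ∂P :=
        integral_congr_ae hX'.2
      rw [h1] at h2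
      rw [h2]
      simp [measure_univ]
    -- value of welfare at X
    have hwelfX : welfareW P u T lam X = u 0 (c 0) +
        ∑ i ∈ Finset.univ.erase (0 : Fin (n+1)), lam i * u i (c i) := by
      rw [welfareW, heq0]
      congr 1
      apply Finset.sum_congr rfl
      intro i hi
      rw [heqi i (Finset.mem_erase.mp hi).1]
    -- bound welfare at X'
    have hb0 : RDUf P (u 0) (conjW T) (X' 0) ≤ u 0 (c 0) + A * (c' 0 - c 0) :=
      RDUf_le_tangent P hT hTconv (hu 0) (hX'b 0) (hC'b 0) (c 0)
    have hbi : ∀ i ∈ Finset.univ.erase (0 : Fin (n+1)),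
        lam i * EUf P (u i) (X' i) ≤ lam i * u i (c i) + A * (c' i - c i) := by
      intro i hi
      have htang := EUf_le_tangent P (hu i) (hX'b i) (hC'b i) (c i)
      calc lam i * EUf P (u i) (X' i)
          ≤ lam i * (u i (c i) + deriv (u i) (c i) * (c' i - c i)) :=
            mul_le_mul_of_nonneg_left htang (hlampos i).le
        _ = lam i * u i (c i) + lam i * deriv (u i) (c i) * (c' i - c i) := by ring
        _ = lam i * u i (c i) + A * (c' i - c i) := by rw [hlammul i]
    have hslack : A * (c' 0 - c 0) +
        ∑ i ∈ Finset.univ.erase (0 : Fin (n+1)), A * (c' i - c i) = 0 := by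
      have h1 : A * (c' 0 - c 0) + ∑ i ∈ Finset.univ.erase (0 : Fin (n+1)), A * (c' i - c i)
          = ∑ i : Fin (n+1), A * (c' i - c i) :=
        Finset.add_sum_erase Finset.univ (fun i => A * (c' i - c i)) (Finset.mem_univ 0)
      rw [h1, ← Finset.mul_sum, Finset.sum_sub_distrib, hsumc', hsumc]
      ring
    calc welfareW P u T lam X'
        = RDUf P (u 0) (conjW T) (X' 0) +
          ∑ i ∈ Finset.univ.erase (0 : Fin (n+1)), lam i * EUf P (u i) (X' i) := rfl
      _ ≤ (u 0 (c 0) + A * (c' 0 - c 0)) +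
          ∑ i ∈ Finset.univ.erase (0 : Fin (n+1)), (lam i * u i (c i) + A * (c' i - c i)) :=
            add_le_add hb0 (Finset.sum_le_sum hbi)
      _ = (u 0 (c 0) + ∑ i ∈ Finset.univ.erase (0 : Fin (n+1)), lam i * u i (c i)) +
          (A * (c' 0 - c 0) + ∑ i ∈ Finset.univ.erase (0 : Fin (n+1)), A * (c' i - c i)) := by
            rw [Finset.sum_add_distrib]; ring
      _ = welfareW P u T lam X := by rw [hslack, hwelfX]; ring


end
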